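/- arXiv:2309.03765 — 2 statements merged into one kernel-verified Lean document; each statement's English description precedes it below -/
import Mathlib

section
/- Let L = se₂(3) × se₂(3) (pairs (W, T) of velocity and bias-derivative inputs) and let D = SE₂(3) ⋉ se₂(3) be the group with product (C_X, γ_X)(C_Y, γ_Y) = (C_X C_Y, γ_X + C_X γ_Y C_X⁻¹). For C ∈ SE₂(3) with blocks (A, a, b), let Ω(C) ∈ se₂(3) be the element [[0₃ₓ₃, 0, a], [0₁ₓ₃, 0, 0], [0₁ₓ₃, 0, 0]] (ω-block zero, u-column zero, v-column equal to the velocity column a of C). Then the map ψ : D × L → L defined by ψ((C, γ), (W, T)) = (C⁻¹ (W − γ) C + Ω(C⁻¹), C⁻¹ T C) is a right group action of D on L; that is, ψ((I, 0), (W, T)) = (W, T) and ψ(X, ψ(Y, (W, T))) = ψ(Y X, (W, T)) for all X, Y ∈ D. -/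
open Matrix

noncomputable section

abbrev V3 := Fin 3 → ℝ
abbrev Mat3 := Matrix (Fin 3) (Fin 3) ℝ
abbrev Mat5 := Matrix (Fin 5) (Fin 5) ℝ

/-- `SO(3)`: real 3×3 matrices with `Rᵀ R = I` and `det R = 1`. -/
def SO3 (A : Mat3) : Prop := Aᵀ * A = 1 ∧ A.det = 1

/-- The 5×5 block matrix `[[A, a, b], [0, 1, 0], [0, 0, 1]]`. -/
def se23mk (A : Mat3) (a b : V3) : Mat5 :=
  Matrix.of fun i j =>
    if hi : (i : ℕ) < 3 then
      if hj : (j : ℕ) < 3 then A ⟨(i : ℕ), hi⟩ ⟨(j : ℕ), hj⟩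
      else if (j : ℕ) = 3 then a ⟨(i : ℕ), hi⟩ else b ⟨(i : ℕ), hi⟩
    else if (i : ℕ) = (j : ℕ) then 1 else 0

/-- `SE₂(3)`: 5×5 block matrices `[[A, a, b], [0, 1, 0], [0, 0, 1]]` with `A ∈ SO(3)`. -/
def SE23 (C : Mat5) : Prop := ∃ (A : Mat3) (a b : V3), SO3 A ∧ C = se23mk A a b

/-- `x^∧`: the 3×3 skew-symmetric matrix with `x^∧ y = x × y`. -/
def wedge (x : V3) : Mat3 :=
  !![0, -x 2, x 1; x 2, 0, -x 0; -x 1, x 0, 0]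

/-- The 5×5 block matrix `[[ω^∧, u, v], [0, 0, 0], [0, 0, 0]]`. -/
def se23algMk (ω u v : V3) : Mat5 :=
  Matrix.of fun i j =>
    if hi : (i : ℕ) < 3 then
      if hj : (j : ℕ) < 3 then wedge ω ⟨(i : ℕ), hi⟩ ⟨(j : ℕ), hj⟩
      else if (j : ℕ) = 3 then u ⟨(i : ℕ), hi⟩ else v ⟨(i : ℕ), hi⟩
    else 0

/-- `se₂(3)`: 5×5 block matrices `[[ω^∧, u, v], [0, 0, 0], [0, 0, 0]]`. -/
def se23Alg (M : Mat5) : Prop := ∃ ω u v : V3, M = se23algMk ω u v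

/-- The product of the Tangent group `D = SE₂(3) ⋉ se₂(3)`:
`(C_X, γ_X)(C_Y, γ_Y) = (C_X C_Y, γ_X + C_X γ_Y C_X⁻¹)`. -/
def tgMul (X Y : Mat5 × Mat5) : Mat5 × Mat5 :=
  (X.1 * Y.1, X.2 + X.1 * Y.2 * X.1⁻¹)

/-- `Ω(C) ∈ se₂(3)`: the element `[[0₃ₓ₃, 0, a], [0₁ₓ₃, 0, 0], [0₁ₓ₃, 0, 0]]` where
`a` is the velocity column (fourth column) of `C`. -/
def OmegaM (C : Mat5) : Mat5 :=
  se23algMk 0 0 (fun i => C (Fin.castLE (by norm_num) i) 3)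

/-- The action `ψ((C, γ), (W, T)) = (C⁻¹ (W − γ) C + Ω(C⁻¹), C⁻¹ T C)` of
`D = SE₂(3) ⋉ se₂(3)` on the input space `L = se₂(3) × se₂(3)`. -/
def psiTG (C γ W T : Mat5) : Mat5 × Mat5 :=
  (C⁻¹ * (W - γ) * C + OmegaM C⁻¹, C⁻¹ * T * C)

lemma cv0 : ((0 : Fin 5) : ℕ) = 0 := rfl
lemma cv1 : ((1 : Fin 5) : ℕ) = 1 := rfl
lemma cv2 : ((2 : Fin 5) : ℕ) = 2 := rfl
lemma cv3 : ((3 : Fin 5) : ℕ) = 3 := rfl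
lemma cv4 : ((4 : Fin 5) : ℕ) = 4 := rfl
lemma cw0 : ((0 : Fin 3) : ℕ) = 0 := rfl
lemma cw1 : ((1 : Fin 3) : ℕ) = 1 := rfl
lemma cw2 : ((2 : Fin 3) : ℕ) = 2 := rfl

set_option maxHeartbeats 1000000 in
lemma mk_one : se23mk 1 0 0 = (1 : Mat5) := by
  ext ⟨i, hi⟩ ⟨j, hj⟩
  interval_cases i <;> interval_cases j <;>
    simp [se23mk, Matrix.one_apply, cv0, cv1, cv2, cv3, cv4]

set_option maxHeartbeats 2000000 in
lemma mul_mk (A A' : Mat3) (a b a' b' : V3) :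
    se23mk A a b * se23mk A' a' b'
      = se23mk (A * A') (A *ᵥ a' + a) (A *ᵥ b' + b) := by
  ext ⟨i, hi⟩ ⟨j, hj⟩
  interval_cases i <;> interval_cases j <;>
    simp [se23mk, Matrix.mul_apply, Matrix.mulVec, dotProduct,
      Fin.sum_univ_five, Fin.sum_univ_three, cv0, cv1, cv2, cv3, cv4,
      cw0, cw1, cw2]

set_option maxHeartbeats 2000000 in
lemma mk_mul_alg00 (A : Mat3) (a b v : V3) :
    se23mk A a b * se23algMk 0 0 v = se23algMk 0 0 (A *ᵥ v) := by
  ext ⟨i, hi⟩ ⟨j, hj⟩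
  interval_cases i <;> interval_cases j <;>
    simp [se23mk, se23algMk, wedge, Matrix.mul_apply, Matrix.mulVec,
      dotProduct, Fin.sum_univ_five, Fin.sum_univ_three,
      cv0, cv1, cv2, cv3, cv4, cw0, cw1, cw2]

set_option maxHeartbeats 2000000 in
lemma alg00_mul_mk (v : V3) (A : Mat3) (a b : V3) :
    se23algMk 0 0 v * se23mk A a b = se23algMk 0 0 v := by
  ext ⟨i, hi⟩ ⟨j, hj⟩
  interval_cases i <;> interval_cases j <;>
    simp [se23mk, se23algMk, wedge, Matrix.mul_apply,
      Fin.sum_univ_five, cv0, cv1, cv2, cv3, cv4, cw0, cw1, cw2]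

set_option maxHeartbeats 1000000 in
lemma alg00_add (v w : V3) :
    se23algMk 0 0 v + se23algMk 0 0 w = se23algMk 0 0 (v + w) := by
  ext ⟨i, hi⟩ ⟨j, hj⟩
  interval_cases i <;> interval_cases j <;>
    simp [se23algMk, wedge, cv0, cv1, cv2, cv3, cv4]

set_option maxHeartbeats 1000000 in
lemma alg00_zero : se23algMk 0 0 0 = (0 : Mat5) := by
  ext ⟨i, hi⟩ ⟨j, hj⟩
  interval_cases i <;> interval_cases j <;>
    simp [se23algMk, wedge, cv0, cv1, cv2, cv3, cv4]

lemma Omega_mk (A : Mat3) (a b : V3) :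
    OmegaM (se23mk A a b) = se23algMk 0 0 a := by
  unfold OmegaM
  congr 1
  funext i
  simp [se23mk, i.isLt, cv3]

lemma Omega_one : OmegaM (1 : Mat5) = 0 := by
  rw [← mk_one, Omega_mk, alg00_zero]

lemma mk_mul_inv (A : Mat3) (a b : V3) (hA : Aᵀ * A = 1) :
    se23mk A a b * se23mk Aᵀ (-(Aᵀ *ᵥ a)) (-(Aᵀ *ᵥ b)) = 1 := by
  have hA' : A * Aᵀ = 1 := mul_eq_one_comm.mpr hA
  have h1 : A *ᵥ (-(Aᵀ *ᵥ a)) + a = 0 := by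
    rw [Matrix.mulVec_neg, Matrix.mulVec_mulVec, hA', Matrix.one_mulVec]
    exact neg_add_cancel a
  have h2 : A *ᵥ (-(Aᵀ *ᵥ b)) + b = 0 := by
    rw [Matrix.mulVec_neg, Matrix.mulVec_mulVec, hA', Matrix.one_mulVec]
    exact neg_add_cancel b
  rw [mul_mk, h1, h2, hA', mk_one]

lemma inv_mk (A : Mat3) (a b : V3) (hA : Aᵀ * A = 1) :
    (se23mk A a b)⁻¹ = se23mk Aᵀ (-(Aᵀ *ᵥ a)) (-(Aᵀ *ᵥ b)) :=
  Matrix.inv_eq_right_inv (mk_mul_inv A a b hA)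

lemma helper (P Q C D W γY γX Ω1 Ω2 : Mat5) (h1 : Q * C = 1) :
    P * ((Q * (W - γY) * C + Ω1) - γX) * D + Ω2
      = P * Q * (W - (γY + C * γX * Q)) * (C * D) + (P * Ω1 * D + Ω2) := by
  have h : P * Q * (C * γX * Q) * (C * D) = P * γX * D := by
    have e : P * Q * (C * γX * Q) * (C * D) = P * ((Q * C) * γX * (Q * C)) * D := by
      noncomm_ring
    rw [e, h1, one_mul, mul_one]
  have h2 : P * Q * (W - (γY + C * γX * Q)) * (C * D)
      = P * Q * (W - γY) * (C * D) - P * Q * (C * γX * Q) * (C * D) := by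
    noncomm_ring
  rw [h2, h]
  noncomm_ring

/-- `ψ` is a right group action of `D = SE₂(3) ⋉ se₂(3)` on `L = se₂(3) × se₂(3)`:
`ψ((I, 0), (W, T)) = (W, T)` and `ψ(X, ψ(Y, (W, T))) = ψ(Y X, (W, T))`. -/
theorem stmt7 :
    -- identity axiom: ψ((I₅, 0), (W, T)) = (W, T)
    (∀ (W T : Mat5), se23Alg W → se23Alg T → psiTG 1 0 W T = (W, T)) ∧
    -- compatibility axiom: ψ(X, ψ(Y, u)) = ψ(Y X, u)
    (∀ (CX γX CY γY W T : Mat5),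
      SE23 CX → se23Alg γX → SE23 CY → se23Alg γY → se23Alg W → se23Alg T →
      psiTG CX γX (psiTG CY γY W T).1 (psiTG CY γY W T).2
        = psiTG (tgMul (CY, γY) (CX, γX)).1 (tgMul (CY, γY) (CX, γX)).2 W T) := by
  constructor
  · intro W T _ _
    have h1 : (1 : Mat5)⁻¹ = 1 := Matrix.inv_eq_right_inv (one_mul 1)
    simp [psiTG, h1, Omega_one]
  · rintro CX γX CY γY W T ⟨AX, aX, bX, hAX, rfl⟩ _ ⟨AY, aY, bY, hAY, rfl⟩ _ _ _
    have hXinv := inv_mk AX aX bX hAX.1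
    have hYinv := inv_mk AY aY bY hAY.1
    have hY1 : se23mk AY aY bY * (se23mk AY aY bY)⁻¹ = 1 := by
      rw [hYinv]; exact mk_mul_inv AY aY bY hAY.1
    have hYl : (se23mk AY aY bY)⁻¹ * se23mk AY aY bY = 1 :=
      mul_eq_one_comm.mp hY1
    have hΩ : (se23mk AX aX bX)⁻¹ * OmegaM (se23mk AY aY bY)⁻¹ * se23mk AX aX bX
        + OmegaM (se23mk AX aX bX)⁻¹
        = OmegaM ((se23mk AX aX bX)⁻¹ * (se23mk AY aY bY)⁻¹) := by
      rw [hXinv, hYinv, Omega_mk, Omega_mk, mk_mul_alg00, alg00_mul_mk,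
        alg00_add, mul_mk, Omega_mk]
    simp only [psiTG, tgMul, Prod.mk.injEq]
    rw [Matrix.mul_inv_rev, ← hΩ]
    constructor
    · exact helper _ _ _ _ _ _ _ _ _ hYl
    · noncomm_ring
end
end

section
/- Let M = SE(3) × se(3) × ℝ³ and let A = (SE(3) ⋉ se(3)) × ℝ³ be the group of triples (B, β, c) with B ∈ SE(3), β ∈ se(3), c ∈ ℝ³ and product (B_X, β_X, c_X)(B_Y, β_Y, c_Y) = (B_X B_Y, β_X + B_X β_Y B_X⁻¹, c_X + c_Y). Then the map φ : A × M → M defined by φ((B, β, c), (P, Bᵦ, p)) = (P B, B⁻¹ (Bᵦ − β) B, p + c) is a transitive right group action of A on M. -/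
open Matrix

noncomputable section

abbrev Mat4 := Matrix (Fin 4) (Fin 4) ℝ

/-- The 4×4 block matrix `[[A, a], [0, 1]]`. -/
def se3mk (A : Mat3) (a : V3) : Mat4 :=
  Matrix.of fun i j =>
    if hi : (i : ℕ) < 3 then
      if hj : (j : ℕ) < 3 then A ⟨(i : ℕ), hi⟩ ⟨(j : ℕ), hj⟩
      else a ⟨(i : ℕ), hi⟩
    else if (i : ℕ) = (j : ℕ) then 1 else 0

/-- `SE(3)` (the homogeneous Galilean group `HG(3)` of the paper): 4×4 block matrices
`[[A, a], [0, 1]]` with `A ∈ SO(3)`, `a ∈ ℝ³`. -/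
def SE3 (B : Mat4) : Prop := ∃ (A : Mat3) (a : V3), SO3 A ∧ B = se3mk A a

/-- The 4×4 block matrix `[[ω^∧, u], [0, 0]]`. -/
def se3algMk (ω u : V3) : Mat4 :=
  Matrix.of fun i j =>
    if hi : (i : ℕ) < 3 then
      if hj : (j : ℕ) < 3 then wedge ω ⟨(i : ℕ), hi⟩ ⟨(j : ℕ), hj⟩
      else u ⟨(i : ℕ), hi⟩
    else 0

/-- `se(3)`: 4×4 block matrices `[[ω^∧, u], [0, 0]]` with `ω, u ∈ ℝ³`. -/
def se3Alg (M : Mat4) : Prop := ∃ ω u : V3, M = se3algMk ω u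

/-- The product of the group `A = (SE(3) ⋉ se(3)) × ℝ³`:
`(B_X, β_X, c_X)(B_Y, β_Y, c_Y) = (B_X B_Y, β_X + B_X β_Y B_X⁻¹, c_X + c_Y)`. -/
def dpMul (X Y : Mat4 × Mat4 × V3) : Mat4 × Mat4 × V3 :=
  (X.1 * Y.1, X.2.1 + X.1 * Y.2.1 * X.1⁻¹, X.2.2 + Y.2.2)

/-- The action `φ((B, β, c), (P, Bᵦ, p)) = (P B, B⁻¹ (Bᵦ − β) B, p + c)` of
`A = (SE(3) ⋉ se(3)) × ℝ³` on `M = SE(3) × se(3) × ℝ³`. -/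
def phiDP (B β : Mat4) (c : V3) (P Bb : Mat4) (p : V3) : Mat4 × Mat4 × V3 :=
  (P * B, B⁻¹ * (Bb - β) * B, p + c)


/-! ### Auxiliary machinery -/

/-- General block matrix `[[A, a], [0, s]]`. -/
def blk (A : Mat3) (a : V3) (s : ℝ) : Mat4 :=
  Matrix.of fun i j =>
    if hi : (i : ℕ) < 3 then
      if hj : (j : ℕ) < 3 then A ⟨(i : ℕ), hi⟩ ⟨(j : ℕ), hj⟩
      else a ⟨(i : ℕ), hi⟩
    else if hj : (j : ℕ) < 3 then 0 else s

lemma f3 : ((3:Fin 4):ℕ) = 3 := rfl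

lemma se3mk_eq (A : Mat3) (a : V3) : se3mk A a = blk A a 1 := by
  ext i j; fin_cases i <;> fin_cases j <;> simp [se3mk, blk, f3]

lemma se3algMk_eq (ω u : V3) : se3algMk ω u = blk (wedge ω) u 0 := by
  ext i j; fin_cases i <;> fin_cases j <;> simp [se3algMk, blk, f3]

lemma blk_mul (A B : Mat3) (a b : V3) (s t : ℝ) :
    blk A a s * blk B b t = blk (A * B) (fun i => (A *ᵥ b) i + t * a i) (s * t) := by
  ext i j
  fin_cases i <;> fin_cases j <;>
    simp [blk, Matrix.mul_apply, Fin.sum_univ_four, Matrix.mulVec, dotProduct,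
      Fin.sum_univ_three, f3] <;> ring

lemma blk_one : blk 1 0 1 = (1 : Mat4) := by
  ext i j; fin_cases i <;> fin_cases j <;> simp [blk, Matrix.one_apply, f3]

lemma blk_sub (A B : Mat3) (a b : V3) :
    blk A a 0 - blk B b 0 = blk (A - B) (a - b) 0 := by
  ext i j; fin_cases i <;> fin_cases j <;> simp [blk, f3]

lemma wedge_transpose (x : V3) : (wedge x)ᵀ = -wedge x := by
  ext i j; fin_cases i <;> fin_cases j <;> simp [wedge]

lemma wedge_sub (x y : V3) : wedge x - wedge y = wedge (x - y) := by
  ext i j; fin_cases i <;> fin_cases j <;> simp [wedge] <;> ring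

lemma skew_wedge {M : Mat3} (h : Mᵀ = -M) : ∃ ω : V3, M = wedge ω := by
  refine ⟨![M 2 1, M 0 2, M 1 0], ?_⟩
  have h' : ∀ i j, M j i = - M i j := fun i j => by
    have := congrFun (congrFun h i) j
    simpa [Matrix.transpose_apply] using this
  ext i j
  fin_cases i <;> fin_cases j <;>
    simp [wedge] <;> first
      | (rw [h' 0 0] at *; linarith [h' 0 0])
      | (rw [h' 1 1] at *; linarith [h' 1 1])
      | (rw [h' 2 2] at *; linarith [h' 2 2])
      | linarith [h' 0 1, h' 0 2, h' 1 2]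

lemma se3mk_prod_one {A : Mat3} (hA : SO3 A) (a : V3) :
    se3mk A a * se3mk Aᵀ (-(Aᵀ *ᵥ a)) = 1 := by
  have hAAT : A * Aᵀ = 1 := mul_eq_one_comm.mp hA.1
  rw [se3mk_eq, se3mk_eq, blk_mul]
  have hv : (fun i => (A *ᵥ (-(Aᵀ *ᵥ a))) i + 1 * a i) = (0 : V3) := by
    funext i
    simp [Matrix.mulVec_neg, Matrix.mulVec_mulVec, hAAT]
  rw [hv, hAAT, mul_one]
  exact blk_one

lemma se3mk_inv {A : Mat3} (hA : SO3 A) (a : V3) :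
    (se3mk A a)⁻¹ = se3mk Aᵀ (-(Aᵀ *ᵥ a)) :=
  Matrix.inv_eq_right_inv (se3mk_prod_one hA a)

lemma SO3_transpose {A : Mat3} (hA : SO3 A) : SO3 Aᵀ :=
  ⟨by rw [Matrix.transpose_transpose]; exact mul_eq_one_comm.mp hA.1,
   by rw [Matrix.det_transpose]; exact hA.2⟩

lemma SO3_mul {A B : Mat3} (hA : SO3 A) (hB : SO3 B) : SO3 (A * B) := by
  constructor
  · have h : (A * B)ᵀ * (A * B) = Bᵀ * (Aᵀ * A) * B := by
      rw [Matrix.transpose_mul]; noncomm_ring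
    rw [h, hA.1, Matrix.mul_one, hB.1]
  · rw [Matrix.det_mul, hA.2, hB.2, mul_one]

lemma SE3_mul {X Y : Mat4} (hX : SE3 X) (hY : SE3 Y) : SE3 (X * Y) := by
  obtain ⟨A, a, hA, rfl⟩ := hX
  obtain ⟨B, b, hB, rfl⟩ := hY
  refine ⟨A * B, fun i => (A *ᵥ b) i + 1 * a i, SO3_mul hA hB, ?_⟩
  rw [se3mk_eq, se3mk_eq, se3mk_eq, blk_mul, mul_one]

lemma SE3_inv {X : Mat4} (hX : SE3 X) : SE3 X⁻¹ := by
  obtain ⟨A, a, hA, rfl⟩ := hX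
  exact ⟨Aᵀ, -(Aᵀ *ᵥ a), SO3_transpose hA, se3mk_inv hA a⟩

lemma SE3_mul_inv {X : Mat4} (hX : SE3 X) : X * X⁻¹ = 1 := by
  obtain ⟨A, a, hA, rfl⟩ := hX
  rw [se3mk_inv hA a]; exact se3mk_prod_one hA a

lemma SE3_inv_mul {X : Mat4} (hX : SE3 X) : X⁻¹ * X = 1 :=
  mul_eq_one_comm.mp (SE3_mul_inv hX)

lemma se3Alg_sub {X Y : Mat4} (hX : se3Alg X) (hY : se3Alg Y) : se3Alg (X - Y) := by
  obtain ⟨ω, u, rfl⟩ := hX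
  obtain ⟨ω', u', rfl⟩ := hY
  refine ⟨ω - ω', u - u', ?_⟩
  rw [se3algMk_eq, se3algMk_eq, blk_sub, wedge_sub, se3algMk_eq]

lemma conj_core (A : Mat3) (a b : V3) {γ : Mat4} (hγ : se3Alg γ) :
    se3Alg (se3mk A a * γ * se3mk Aᵀ b) := by
  obtain ⟨ω, u, rfl⟩ := hγ
  rw [se3mk_eq, se3algMk_eq, se3mk_eq, blk_mul, blk_mul]
  have hskew : (A * wedge ω * Aᵀ)ᵀ = -(A * wedge ω * Aᵀ) := by
    simp [Matrix.transpose_mul, Matrix.transpose_transpose, wedge_transpose,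
      Matrix.mul_assoc, Matrix.mul_neg, Matrix.neg_mul]
  obtain ⟨ω', hω'⟩ := skew_wedge hskew
  refine ⟨ω', fun i => ((A * wedge ω) *ᵥ b) i + 1 * ((A *ᵥ u) i + 0 * a i), ?_⟩
  rw [se3algMk_eq, ← hω']
  norm_num

lemma conj_mem {X γ : Mat4} (hX : SE3 X) (hγ : se3Alg γ) : se3Alg (X * γ * X⁻¹) := by
  obtain ⟨A, a, hA, rfl⟩ := hX
  rw [se3mk_inv hA a]
  exact conj_core A a _ hγ

lemma conj_mem' {X γ : Mat4} (hX : SE3 X) (hγ : se3Alg γ) : se3Alg (X⁻¹ * γ * X) := by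
  obtain ⟨A, a, hA, rfl⟩ := hX
  rw [se3mk_inv hA a]
  have := conj_core Aᵀ (-(Aᵀ *ᵥ a)) a hγ
  rwa [Matrix.transpose_transpose] at this

/-- `φ` is a transitive right group action of `A = (SE(3) ⋉ se(3)) × ℝ³` on
`M = SE(3) × se(3) × ℝ³`. -/
theorem stmt8 :
    -- φ maps M into M
    (∀ (B β : Mat4) (c : V3) (P Bb : Mat4) (p : V3),
      SE3 B → se3Alg β → SE3 P → se3Alg Bb →
      SE3 (phiDP B β c P Bb p).1 ∧ se3Alg (phiDP B β c P Bb p).2.1) ∧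
    -- identity axiom: φ((I₄, 0, 0), ξ) = ξ
    (∀ (P Bb : Mat4) (p : V3), phiDP 1 0 0 P Bb p = (P, Bb, p)) ∧
    -- compatibility axiom: φ(X, φ(Y, ξ)) = φ(Y X, ξ)
    (∀ (BX βX : Mat4) (cX : V3) (BY βY : Mat4) (cY : V3)
        (P Bb : Mat4) (p : V3),
      SE3 BX → se3Alg βX → SE3 BY → se3Alg βY → SE3 P → se3Alg Bb →
      phiDP BX βX cX (phiDP BY βY cY P Bb p).1 (phiDP BY βY cY P Bb p).2.1
        (phiDP BY βY cY P Bb p).2.2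
        = phiDP (dpMul (BY, βY, cY) (BX, βX, cX)).1
            (dpMul (BY, βY, cY) (BX, βX, cX)).2.1
            (dpMul (BY, βY, cY) (BX, βX, cX)).2.2 P Bb p) ∧
    -- transitivity
    (∀ (P₁ B₁ : Mat4) (p₁ : V3) (P₂ B₂ : Mat4) (p₂ : V3),
      SE3 P₁ → se3Alg B₁ → SE3 P₂ → se3Alg B₂ →
      ∃ (B β : Mat4) (c : V3), SE3 B ∧ se3Alg β ∧
        phiDP B β c P₁ B₁ p₁ = (P₂, B₂, p₂)) := by
  refine ⟨?_, ?_, ?_, ?_⟩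
  · -- maps into M
    intro B β c P Bb p hB hβ hP hBb
    exact ⟨SE3_mul hP hB, conj_mem' hB (se3Alg_sub hBb hβ)⟩
  · -- identity
    intro P Bb p
    simp [phiDP, inv_one]
  · -- compatibility
    intro BX βX cX BY βY cY P Bb p hBX hβX hBY hβY hP hBb
    have hiY : BY⁻¹ * BY = 1 := SE3_inv_mul hBY
    simp only [phiDP, dpMul, Prod.mk.injEq]
    refine ⟨Matrix.mul_assoc P BY BX, ?_, add_assoc p cY cX⟩
    rw [Matrix.mul_inv_rev]
    have h2 : BX⁻¹ * BY⁻¹ * (Bb - (βY + BY * βX * BY⁻¹)) * (BY * BX)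
        = BX⁻¹ * (BY⁻¹ * (Bb - (βY + BY * βX * BY⁻¹)) * BY) * BX := by noncomm_ring
    have key : BY⁻¹ * (Bb - (βY + BY * βX * BY⁻¹)) * BY
        = BY⁻¹ * (Bb - βY) * BY - (BY⁻¹ * BY) * βX * (BY⁻¹ * BY) := by noncomm_ring
    rw [h2, key, hiY, Matrix.one_mul, Matrix.mul_one]
  · -- transitivity
    intro P₁ B₁ p₁ P₂ B₂ p₂ h1 h2 h3 h4
    have hB : SE3 (P₁⁻¹ * P₂) := SE3_mul (SE3_inv h1) h3
    refine ⟨P₁⁻¹ * P₂, B₁ - (P₁⁻¹ * P₂) * B₂ * (P₁⁻¹ * P₂)⁻¹, p₂ - p₁, hB,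
      se3Alg_sub h2 (conj_mem hB h4), ?_⟩
    have hP1 : P₁ * P₁⁻¹ = 1 := SE3_mul_inv h1
    have hiB : (P₁⁻¹ * P₂)⁻¹ * (P₁⁻¹ * P₂) = 1 := SE3_inv_mul hB
    simp only [phiDP, Prod.mk.injEq]
    refine ⟨by rw [← Matrix.mul_assoc, hP1, Matrix.one_mul], ?_, by funext i; simp⟩
    rw [sub_sub_cancel]
    have h3' : (P₁⁻¹ * P₂)⁻¹ * ((P₁⁻¹ * P₂) * B₂ * (P₁⁻¹ * P₂)⁻¹) * (P₁⁻¹ * P₂)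
        = ((P₁⁻¹ * P₂)⁻¹ * (P₁⁻¹ * P₂)) * B₂ * ((P₁⁻¹ * P₂)⁻¹ * (P₁⁻¹ * P₂)) := by
      noncomm_ring
    rw [h3', hiB, Matrix.one_mul, Matrix.mul_one]
end
end
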